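/- arXiv:1709.01995 — 6 statements merged into one kernel-verified Lean document; each statement's English description precedes it below -/
import Mathlib

section
/- Let a and b be integer linear recurrence sequences of order 2 with a_0 = b_0 = 0, a_1 = b_1 = 1, satisfying a_{n+2} = h1*a_{n+1} - k1*a_n and b_{n+2} = h2*b_{n+1} - k2*b_n. Then the product sequence c_n = a_n * b_n satisfies the order-4 linear recurrence with characteristic polynomial x^4 - p x^3 + (q + 2r) x^2 - p r x + r^2, where p = h1*h2, q = h1^2*k2 + k1*(h2^2 - 4*k2), and r = k1*k2. -/
theorem product_of_lucas_satisfies_standard_order4_recurrence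
    (h1 k1 h2 k2 : ℤ) (a b : ℕ → ℤ)
    (ha0 : a 0 = 0) (ha1 : a 1 = 1)
    (hb0 : b 0 = 0) (hb1 : b 1 = 1)
    (ha : ∀ n, a (n + 2) = h1 * a (n + 1) - k1 * a n)
    (hb : ∀ n, b (n + 2) = h2 * b (n + 1) - k2 * b n)
    (c : ℕ → ℤ) (hc : ∀ n, c n = a n * b n)
    (p q r : ℤ)
    (hp : p = h1 * h2) (hq : q = h1 ^ 2 * k2 + k1 * (h2 ^ 2 - 4 * k2))
    (hr : r = k1 * k2) :
    ∀ n, c (n + 4) = p * c (n + 3) - (q + 2 * r) * c (n + 2)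
      + p * r * c (n + 1) - r ^ 2 * c n := by
  intro n
  have ha2 := ha n
  have ha3 := ha (n + 1)
  have ha4 := ha (n + 2)
  have hb2 := hb n
  have hb3 := hb (n + 1)
  have hb4 := hb (n + 2)
  simp only [hc, hp, hq, hr]
  simp only [show n + 1 + 2 = n + 3 from rfl, show n + 2 + 2 = n + 4 from rfl] at ha3 ha4 hb3 hb4
  rw [ha4, hb4, ha3, hb3, ha2, hb2]
  ring
end

section
/- Let f(x) and g(x) be monic polynomials over a field with companion matrices F and G. If a sequence (a_n) satisfies the recurrence associated to f and (b_n) satisfies the recurrence associated to g, then the product sequence (a_n * b_n) satisfies the linear recurrence whose characteristic polynomial is the characteristic polynomial of the Kronecker product F ⊗ G. -/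
open Polynomial Matrix Kronecker

/-- The companion matrix of a monic polynomial `f` of degree `d` (last column
contains the negated low-order coefficients). -/
def companionMatrix {K : Type*} [Field K] (f : K[X]) :
    Matrix (Fin f.natDegree) (Fin f.natDegree) K :=
  fun i j => if (j : ℕ) = f.natDegree - 1 then -f.coeff i
    else if (i : ℕ) = (j : ℕ) + 1 then 1 else 0

/-- A sequence satisfies the linear recurrence associated to the monic
polynomial `f = x^d - c_{d-1} x^{d-1} - ⋯ - c_0`, i.e.
`a (n+d) = c_{d-1} a (n+d-1) + ⋯ + c_0 a n`. -/
def SatisfiesLinearRec {K : Type*} [Field K] (f : K[X]) (a : ℕ → K) : Prop :=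
  ∀ n : ℕ, a (n + f.natDegree) =
    ∑ i : Fin f.natDegree, (-(f.coeff i)) * a (n + i)

lemma my_charmatrix_transpose {R n : Type*} [CommRing R] [DecidableEq n] [Fintype n]
    (M : Matrix n n R) : charmatrix Mᵀ = (charmatrix M)ᵀ := by
  ext i j
  by_cases h : i = j
  · subst h; simp
  · simp [h, Ne.symm h]

lemma my_charpoly_transpose {R n : Type*} [CommRing R] [DecidableEq n] [Fintype n]
    (M : Matrix n n R) : Mᵀ.charpoly = M.charpoly := by
  rw [Matrix.charpoly, Matrix.charpoly, my_charmatrix_transpose, Matrix.det_transpose]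

lemma shift_sum {K : Type*} [Field K] (f : K[X]) (a : ℕ → K)
    (ha : SatisfiesLinearRec f a) (n : ℕ) (i : Fin f.natDegree) :
    ∑ i' : Fin f.natDegree, companionMatrix f i' i * a (n + i') = a (n + (i : ℕ) + 1) := by
  have hd : 0 < f.natDegree := i.pos
  by_cases h : (i : ℕ) = f.natDegree - 1
  · have h1 : n + (i : ℕ) + 1 = n + f.natDegree := by omega
    rw [h1, ha n]
    apply Finset.sum_congr rfl
    intro i' _
    simp [companionMatrix, h]
  · have hi1 : (i : ℕ) + 1 < f.natDegree := by omega
    rw [Finset.sum_eq_single (⟨(i : ℕ) + 1, hi1⟩ : Fin f.natDegree)]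
    · simp [companionMatrix, h, add_assoc]
    · intro b _ hb
      have hb' : (b : ℕ) ≠ (i : ℕ) + 1 := fun hc => hb (by ext; simpa using hc)
      simp [companionMatrix, h, hb']
    · simp

theorem product_satisfies_kronecker_charpoly_recurrence
    {K : Type*} [Field K] (f g : K[X]) (hf : f.Monic) (hg : g.Monic)
    (a b : ℕ → K)
    (ha : SatisfiesLinearRec f a) (hb : SatisfiesLinearRec g b) :
    SatisfiesLinearRec ((companionMatrix f ⊗ₖ companionMatrix g).charpoly)
      (fun n => a n * b n) := by
  classical
  by_cases hd : f.natDegree = 0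
  · have haz : ∀ n, a n = 0 := by
      intro n
      have hE : IsEmpty (Fin f.natDegree) := by rw [hd]; infer_instance
      have := ha n
      simp [hd, Finset.univ_eq_empty] at this
      exact this
    intro n
    simp [haz]
  by_cases he : g.natDegree = 0
  · have hbz : ∀ n, b n = 0 := by
      intro n
      have hE : IsEmpty (Fin g.natDegree) := by rw [he]; infer_instance
      have := hb n
      simp [he, Finset.univ_eq_empty] at this
      exact this
    intro n
    simp [hbz]
  set F := companionMatrix f with hF
  set G := companionMatrix g with hG
  set M := (F ⊗ₖ G)ᵀ with hMdef
  set p := (F ⊗ₖ G).charpoly with hp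
  set N := p.natDegree with hN
  set W : ℕ → (Fin f.natDegree × Fin g.natDegree) → K :=
    fun n q => a (n + q.1) * b (n + q.2) with hW
  have hstep : ∀ n, M.mulVec (W n) = W (n + 1) := by
    intro n
    funext q
    obtain ⟨i, j⟩ := q
    have : M.mulVec (W n) (i, j)
        = ∑ i' : Fin f.natDegree, ∑ j' : Fin g.natDegree,
            (F i' i * a (n + i')) * (G j' j * b (n + j')) := by
      rw [Matrix.mulVec, dotProduct, Fintype.sum_prod_type]
      apply Finset.sum_congr rfl; intro i' _
      apply Finset.sum_congr rfl; intro j' _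
      simp [hMdef, Matrix.kroneckerMap_apply, hW]
      ring
    rw [this]
    have h2 : ∑ i' : Fin f.natDegree, ∑ j' : Fin g.natDegree,
            (F i' i * a (n + i')) * (G j' j * b (n + j'))
        = (∑ i' : Fin f.natDegree, F i' i * a (n + i')) *
          (∑ j' : Fin g.natDegree, G j' j * b (n + j')) := by
      rw [Finset.sum_mul]
      apply Finset.sum_congr rfl; intro i' _
      rw [Finset.mul_sum]
    rw [h2, shift_sum f a ha n i, shift_sum g b hb n j]
    show _ = a (n + 1 + i) * b (n + 1 + j)
    ring_nf
  have hpow : ∀ k n, (M ^ k).mulVec (W n) = W (n + k) := by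
    intro k
    induction k with
    | zero => intro n; simp
    | succ k ih =>
        intro n
        rw [pow_succ, ← Matrix.mulVec_mulVec, hstep, ih]
        ring_nf
  intro n
  have hCH : aeval M p = 0 := by
    rw [hp, ← my_charpoly_transpose (F ⊗ₖ G)]
    exact Matrix.aeval_self_charpoly M
  have hmonic : p.Monic := Matrix.charpoly_monic _
  have hsum : M ^ N = ∑ k ∈ Finset.range N, (-(p.coeff k)) • M ^ k := by
    have h1 := Polynomial.aeval_eq_sum_range (p := p) M
    rw [Finset.sum_range_succ, ← hN, hmonic.coeff_natDegree, one_smul, hCH] at h1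
    have h2 : M ^ N = -∑ k ∈ Finset.range N, p.coeff k • M ^ k :=
      eq_neg_of_add_eq_zero_left (by rw [add_comm]; exact h1.symm)
    rw [h2]
    simp [neg_smul]
  have key : a (n + N) * b (n + N)
      = ((M ^ N).mulVec (W n)) (⟨0, Nat.pos_of_ne_zero hd⟩, ⟨0, Nat.pos_of_ne_zero he⟩) := by
    rw [hpow]
    simp [hW]
  show a (n + N) * b (n + N) = _
  rw [key, hsum]
  have hentry : ((∑ k ∈ Finset.range N, (-(p.coeff k)) • M ^ k) *ᵥ W n)
        (⟨0, Nat.pos_of_ne_zero hd⟩, ⟨0, Nat.pos_of_ne_zero he⟩)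
      = ∑ k ∈ Finset.range N, (-(p.coeff k)) *
          ((M ^ k *ᵥ W n) (⟨0, Nat.pos_of_ne_zero hd⟩, ⟨0, Nat.pos_of_ne_zero he⟩)) := by
    simp only [Matrix.mulVec, dotProduct, Matrix.sum_apply, Matrix.smul_apply,
      smul_eq_mul, Finset.sum_mul]
    rw [Finset.sum_comm]
    apply Finset.sum_congr rfl; intro k _
    rw [Finset.mul_sum]
    apply Finset.sum_congr rfl; intro q _
    ring
  rw [hentry]
  rw [Fin.sum_univ_eq_sum_range (fun i => (-(p.coeff i)) * (a (n + i) * b (n + i)))]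
  apply Finset.sum_congr rfl
  intro k _
  rw [hpow]
  simp [hW, smul_eq_mul]
end

section
/- Let α, β, γ, δ be the (distinct, nonzero) roots of the characteristic polynomial x^4 - p x^3 + s x^2 - u x + v of a sequence. The polynomial has the form x^4 - p x^3 + (q + 2r) x^2 - p r x + r^2 for some q, r (with r^2 = v) if and only if the roots can be paired so that α δ = β γ with αδ = r (after suitable labeling). -/
open Polynomial

lemma expand4 (a b c d : ℂ) : (X - C a) * (X - C b) * (X - C c) * (X - C d) =
    X^4 - C (a+b+c+d)*X^3 + C (a*b+a*c+a*d+b*c+b*d+c*d)*X^2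
      - C (a*b*c+a*b*d+a*c*d+b*c*d)*X + C (a*b*c*d) := by
  simp only [map_add, map_mul]; ring

lemma quartic_coeffs {a b c d a' b' c' d' : ℂ}
    (h : X^4 - C a*X^3 + C b*X^2 - C c*X + C d = X^4 - C a'*X^3 + C b'*X^2 - C c'*X + C d') :
    a = a' ∧ b = b' ∧ c = c' ∧ d = d' := by
  refine ⟨?_, ?_, ?_, ?_⟩
  · have := congrArg (fun f => f.coeff 3) h
    simpa using this
  · have := congrArg (fun f => f.coeff 2) h
    simpa using this
  · have := congrArg (fun f => f.coeff 1) h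
    simpa using this
  · have := congrArg (fun f => f.coeff 0) h
    simpa using this

lemma prod4 (a b c d : ℂ) : (({a,b,c,d} : Multiset ℂ).map fun x => X - C x).prod
    = (X - C a) * (X - C b) * (X - C c) * (X - C d) := by
  simp [Multiset.map_cons, Multiset.prod_cons]; ring

theorem standard_polynomial_iff_paired_roots
    (α β γ δ p s u v : ℂ)
    (hdist : α ≠ β ∧ α ≠ γ ∧ α ≠ δ ∧ β ≠ γ ∧ β ≠ δ ∧ γ ≠ δ)
    (hnz : α ≠ 0 ∧ β ≠ 0 ∧ γ ≠ 0 ∧ δ ≠ 0)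
    (hfact : (X - C α) * (X - C β) * (X - C γ) * (X - C δ) =
      X ^ 4 - C p * X ^ 3 + C s * X ^ 2 - C u * X + C v) :
    (∃ q r : ℂ, s = q + 2 * r ∧ u = p * r ∧ v = r ^ 2) ↔
      ∃ α' β' γ' δ' : ℂ,
        ({α, β, γ, δ} : Multiset ℂ) = {α', β', γ', δ'} ∧
        α' * δ' = β' * γ' ∧
        ∃ r : ℂ, α' * δ' = r ∧ r ^ 2 = v := by
  constructor
  · rintro ⟨q, r, hsq, hur, hvr⟩
    obtain ⟨w, hw⟩ := IsAlgClosed.exists_pow_nat_eq (k := ℂ) (p^2 - 4*q) zero_lt_two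
    set a := (p + w)/2 with ha
    set b := (p - w)/2 with hb
    have hab1 : a + b = p := by rw [ha, hb]; ring
    have hab2 : a * b = q := by
      rw [ha, hb]
      linear_combination (-1/4 : ℂ) * hw
    obtain ⟨d, hd⟩ := IsAlgClosed.exists_pow_nat_eq (k := ℂ) (a^2 - 4*r) zero_lt_two
    obtain ⟨e, he⟩ := IsAlgClosed.exists_pow_nat_eq (k := ℂ) (b^2 - 4*r) zero_lt_two
    refine ⟨(a+d)/2, (b+e)/2, (b-e)/2, (a-d)/2, ?_, ?_, r, ?_, ?_⟩
    · have h1 : p = (a+d)/2+(b+e)/2+(b-e)/2+(a-d)/2 := by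
        linear_combination -hab1
      have h2 : s = (a+d)/2*((b+e)/2)+(a+d)/2*((b-e)/2)+(a+d)/2*((a-d)/2)
          +(b+e)/2*((b-e)/2)+(b+e)/2*((a-d)/2)+(b-e)/2*((a-d)/2) := by
        linear_combination hsq - hab2 + (1/4 : ℂ)*hd + (1/4 : ℂ)*he
      have h3 : u = (a+d)/2*((b+e)/2)*((b-e)/2)+(a+d)/2*((b+e)/2)*((a-d)/2)
          +(a+d)/2*((b-e)/2)*((a-d)/2)+(b+e)/2*((b-e)/2)*((a-d)/2) := by
        linear_combination hur - r*hab1 + (b/4)*hd + (a/4)*he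
      have hAD : (a+d)/2*((a-d)/2) = r := by linear_combination (-1/4 : ℂ)*hd
      have hBC : (b+e)/2*((b-e)/2) = r := by linear_combination (-1/4 : ℂ)*he
      have h4 : v = (a+d)/2*((b+e)/2)*((b-e)/2)*((a-d)/2) := by
        linear_combination hvr - r*hAD - ((a+d)/2*((a-d)/2))*hBC
      have hpoly : (X - C α) * (X - C β) * (X - C γ) * (X - C δ) =
          (X - C ((a+d)/2)) * (X - C ((b+e)/2)) * (X - C ((b-e)/2)) * (X - C ((a-d)/2)) := by
        rw [hfact, expand4, h1, h2, h3, h4]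
      have hroots := congrArg Polynomial.roots hpoly
      rw [← prod4, ← prod4, Polynomial.roots_multiset_prod_X_sub_C,
        Polynomial.roots_multiset_prod_X_sub_C] at hroots
      exact hroots
    · linear_combination (he - hd)/4
    · linear_combination (-1/4 : ℂ)*hd
    · exact hvr.symm
  · rintro ⟨α', β', γ', δ', hms, hpair, r, hr, hrv⟩
    have hprodeq : (X - C α) * (X - C β) * (X - C γ) * (X - C δ) =
        (X - C α') * (X - C β') * (X - C γ') * (X - C δ') := by
      rw [← prod4, ← prod4, hms]
    have hvieta' : X^4 - C p*X^3 + C s*X^2 - C u*X + C v =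
        X^4 - C (α'+β'+γ'+δ')*X^3 + C (α'*β'+α'*γ'+α'*δ'+β'*γ'+β'*δ'+γ'*δ')*X^2
        - C (α'*β'*γ'+α'*β'*δ'+α'*γ'*δ'+β'*γ'*δ')*X + C (α'*β'*γ'*δ') := by
      rw [← hfact, hprodeq, expand4]
    obtain ⟨hp', hs', hu', hv'⟩ := quartic_coeffs hvieta'
    refine ⟨s - 2*r, r, by ring, ?_, ?_⟩
    · rw [hu', hp']
      linear_combination (β'+γ')*hr - (α'+δ')*hpair + (α'+δ')*hr
    · rw [hv']
      linear_combination (β'*γ')*hr - r*hpair + r*hr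
end

section
/- Let p, q, r be complex numbers with r ≠ 0 and p ≠ 0. Define h1 = √(k1) * (√(q+4r+2p√r) ± √(q+4r-2p√r))/(2√r), h2 = (√(q+4r+2p√r) ∓ √(q+4r-2p√r))/(2√(k1)) (for a suitable choice of square roots), k2 = r/k1. Then k1 k2 = r, h1 h2 = p, and h1^2 k2 + h2^2 k1 = q + 4r. -/
theorem standard_factorization_parameters
    (p q r k1 k2 h1 h2 s1 s2 sr sk1 : ℂ)
    (hr : r ≠ 0) (hp : p ≠ 0) (hk1 : k1 ≠ 0)
    (hsr : sr ^ 2 = r) (hsk1 : sk1 ^ 2 = k1)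
    (hs1 : s1 ^ 2 = q + 4 * r + 2 * p * sr)
    (hs2 : s2 ^ 2 = q + 4 * r - 2 * p * sr)
    (hh1 : h1 = sk1 * (s1 + s2) / (2 * sr))
    (hh2 : h2 = (s1 - s2) / (2 * sk1))
    (hk2 : k2 = r / k1) :
    k1 * k2 = r ∧ h1 * h2 = p ∧ h1 ^ 2 * k2 + h2 ^ 2 * k1 = q + 4 * r := by
  have hsr0 : sr ≠ 0 := by intro h; apply hr; rw [← hsr, h]; ring
  have hsk0 : sk1 ≠ 0 := by intro h; apply hk1; rw [← hsk1, h]; ring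
  subst hh1 hh2 hk2
  refine ⟨by field_simp, ?_, ?_⟩
  · field_simp
    linear_combination hs1 - hs2
  · subst hsr hsk1
    field_simp
    ring_nf
    linear_combination 2 * hs1 + 2 * hs2
end

section
/- Let t ≥ 6 be an integer and let α = (1/4)(t + √((t-4)t+8) + √2 · √(t(t + √((t-4)t+8) - 2) - 4)). Then α is a root of x^4 - t x^3 + t x^2 - t x + 1 and α > 1, while the other roots of this polynomial are α^{-1} and a pair of complex conjugates of absolute value 1. -/
open Polynomial

theorem salem_root_explicit_formula
    (t : ℤ) (ht : 6 ≤ t) (α : ℝ)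
    (hαdef : α = (1 / 4) * ((t : ℝ) + Real.sqrt (((t : ℝ) - 4) * (t : ℝ) + 8) +
      Real.sqrt 2 *
        Real.sqrt ((t : ℝ) * ((t : ℝ) + Real.sqrt (((t : ℝ) - 4) * (t : ℝ) + 8) - 2) - 4))) :
    α ^ 4 - (t : ℝ) * α ^ 3 + (t : ℝ) * α ^ 2 - (t : ℝ) * α + 1 = 0 ∧ 1 < α ∧
      ∃ z : ℂ, z.im ≠ 0 ∧ ‖z‖ = 1 ∧
        ((X ^ 4 - C (t : ℂ) * X ^ 3 + C (t : ℂ) * X ^ 2 - C (t : ℂ) * X + 1 : ℂ[X]).roots =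
          {(α : ℂ), ((α⁻¹ : ℝ) : ℂ), z, (starRingEnd ℂ) z}) := by
  have hT : (6 : ℝ) ≤ (t : ℝ) := by exact_mod_cast ht
  set T : ℝ := (t : ℝ) with hT_def
  have hDnn : 0 ≤ (T - 4) * T + 8 := by nlinarith
  set d : ℝ := Real.sqrt ((T - 4) * T + 8) with hd_def
  have hdnn : 0 ≤ d := Real.sqrt_nonneg _
  have hd2 : d ^ 2 = (T - 4) * T + 8 := Real.sq_sqrt hDnn
  have hd_lt : d < T - 1 := by nlinarith
  have hd_gt : T - 4 < d := by nlinarith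
  set s : ℝ := (T + d) / 2 with hs_def
  set s' : ℝ := (T - d) / 2 with hs'_def
  have hs_sum : s + s' = T := by rw [hs_def, hs'_def]; ring
  have hs_prod : s * s' = T - 2 := by rw [hs_def, hs'_def]; linear_combination (-1/4 : ℝ) * hd2
  have hs4 : 4 ≤ s := by rw [hs_def]; linarith
  have hs'0 : 0 < s' := by rw [hs'_def]; linarith
  have hs'2 : s' < 2 := by rw [hs'_def]; linarith
  have he_nn : (0:ℝ) ≤ s ^ 2 - 4 := by nlinarith
  set e : ℝ := Real.sqrt (s ^ 2 - 4) with he_def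
  have henn : 0 ≤ e := Real.sqrt_nonneg _
  have he2 : e ^ 2 = s ^ 2 - 4 := Real.sq_sqrt he_nn
  -- rewrite α
  have hinner : T * (T + d - 2) - 4 = 2 * (s ^ 2 - 4) := by
    rw [hs_def]; linear_combination (-1/2 : ℝ) * hd2
  have hα : α = (s + e) / 2 := by
    rw [hαdef, hinner, ← Real.sqrt_mul (by norm_num : (0:ℝ) ≤ 2),
      show (2:ℝ) * (2 * (s ^ 2 - 4)) = 2 ^ 2 * (s ^ 2 - 4) by ring,
      Real.sqrt_mul (by positivity), Real.sqrt_sq (by norm_num : (0:ℝ) ≤ 2), ← he_def,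
      hs_def]
    ring
  have hα_gt1 : 1 < α := by rw [hα]; linarith
  have hα_pos : 0 < α := by linarith
  have hαroot : α ^ 2 - s * α + 1 = 0 := by
    rw [hα]; linear_combination (1/4 : ℝ) * he2
  have hαinv : α⁻¹ = (s - e) / 2 := by
    have hmul : α * ((s - e) / 2) = 1 := by
      rw [hα]; linear_combination (-1/4 : ℝ) * he2
    field_simp at hmul ⊢
    linarith [hmul]
  have hreal : α ^ 4 - T * α ^ 3 + T * α ^ 2 - T * α + 1 = 0 := by
    linear_combination (α ^ 2 - s' * α + 1) * hαroot + (α ^ 3 + α) * hs_sum - α ^ 2 * hs_prod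
  -- complex roots
  have hc_nn : (0:ℝ) < 4 - s' ^ 2 := by nlinarith
  set c : ℝ := Real.sqrt (4 - s' ^ 2) with hc_def
  have hc_pos : 0 < c := Real.sqrt_pos.mpr hc_nn
  have hc2 : c ^ 2 = 4 - s' ^ 2 := Real.sq_sqrt hc_nn.le
  set z : ℂ := (s' / 2 : ℝ) + (c / 2 : ℝ) * Complex.I with hz_def
  have hz_re : z.re = s' / 2 := by simp [hz_def]
  have hz_im : z.im = c / 2 := by simp [hz_def]
  have him : z.im ≠ 0 := by rw [hz_im]; positivity
  have hnorm : Complex.normSq z = 1 := by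
    rw [Complex.normSq_apply, hz_re, hz_im]
    linear_combination (1/4 : ℝ) * hc2
  have habs : ‖z‖ = 1 := by
    rw [Complex.norm_def, hnorm, Real.sqrt_one]
  have hz_sum : z + (starRingEnd ℂ) z = (s' : ℂ) := by
    rw [Complex.add_conj, hz_re]; push_cast; ring
  have hz_prod : z * (starRingEnd ℂ) z = 1 := by
    rw [Complex.mul_conj, hnorm]; norm_num
  -- cast real facts
  have hab_sum : (α : ℂ) + ((α⁻¹ : ℝ) : ℂ) = (s : ℂ) := by
    have : α + α⁻¹ = s := by rw [hαinv, hα]; ring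
    exact_mod_cast this
  have hab_prod : (α : ℂ) * ((α⁻¹ : ℝ) : ℂ) = 1 := by
    have : α * α⁻¹ = 1 := mul_inv_cancel₀ (ne_of_gt hα_pos)
    exact_mod_cast this
  have hS : (s : ℂ) + (s' : ℂ) = ((t : ℝ) : ℂ) := by exact_mod_cast hs_sum
  have hP : (s : ℂ) * (s' : ℂ) = ((t : ℝ) : ℂ) - 2 := by
    rw [show ((t : ℝ) : ℂ) - 2 = ((T - 2 : ℝ) : ℂ) by push_cast [hT_def]; ring, ← hs_prod]
    push_cast; ring
  clear_value T d s s' e c z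
  have hpoly : (X ^ 4 - C (t : ℂ) * X ^ 3 + C (t : ℂ) * X ^ 2 - C (t : ℂ) * X + 1 : ℂ[X]) =
      (Multiset.map (fun r => X - C r)
        ({(α : ℂ), ((α⁻¹ : ℝ) : ℂ), z, (starRingEnd ℂ) z} : Multiset ℂ)).prod := by
    apply Polynomial.funext
    intro x
    simp only [Multiset.insert_eq_cons, Multiset.map_cons, Multiset.map_singleton,
      Multiset.prod_cons, Multiset.prod_singleton, eval_mul, eval_sub, eval_add, eval_pow,
      eval_C, eval_X, eval_one]
    have e1 : (x - (α : ℂ)) * (x - ((α⁻¹ : ℝ) : ℂ)) = x ^ 2 - (s : ℂ) * x + 1 := by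
      linear_combination (-x) * hab_sum + hab_prod
    have e2 : (x - z) * (x - (starRingEnd ℂ) z) = x ^ 2 - (s' : ℂ) * x + 1 := by
      linear_combination (-x) * hz_sum + hz_prod
    have ht' : (t : ℂ) = ((t : ℝ) : ℂ) := by push_cast; ring
    rw [ht']
    linear_combination (x ^ 3 + x) * hS - x ^ 2 * hP -
      (x ^ 2 - (s' : ℂ) * x + 1) * e1 - ((x - (α : ℂ)) * (x - ((α⁻¹ : ℝ) : ℂ))) * e2
  refine ⟨hreal, hα_gt1, z, him, habs, ?_⟩
  rw [hpoly, Polynomial.roots_multiset_prod_X_sub_C]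
end

section
/- The integer sequence u defined by u_1 = 1, u_2 = 6, u_3 = 29, u_4 = 144 and u_{n+4} = 6 u_{n+3} - 6 u_{n+2} + 6 u_{n+1} - u_n (with u_0 = 0) is a divisibility sequence: m | n implies u_m | u_n. -/
theorem salem_t6_divisibility_sequence
    (u : ℕ → ℤ)
    (hu0 : u 0 = 0) (hu1 : u 1 = 1) (hu2 : u 2 = 6) (hu3 : u 3 = 29) (hu4 : u 4 = 144)
    (hurec : ∀ n, u (n + 4) = 6 * u (n + 3) - 6 * u (n + 2) + 6 * u (n + 1) - u n) :
    ∀ m n : ℕ, m ∣ n → u m ∣ u n := by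
  -- the companion "trace" sequence
  set d : ℕ → ℤ := fun n => match n with
    | 0 => 2
    | Nat.succ k => u (k + 2) + u k - 3 * u (k + 1) with hdef
  have hd0 : d 0 = 2 := rfl
  have hdS : ∀ k, d (k + 1) = u (k + 2) + u k - 3 * u (k + 1) := fun k => rfl
  have hd1 : d 1 = 3 := by
    have h : d 1 = u 2 + u 0 - 3 * u 1 := hdS 0
    rw [h, hu0, hu1, hu2]; norm_num
  have hd2 : d 2 = 12 := by
    have h : d 2 = u 3 + u 1 - 3 * u 2 := hdS 1
    rw [h, hu1, hu2, hu3]; norm_num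
  have hA1 : ∀ j, u (j + 2) + u j = d (j + 1) + 3 * u (j + 1) := by
    intro j; rw [hdS]; ring
  have hB1 : ∀ j, d (j + 2) + d j = 3 * d (j + 1) + 5 * u (j + 1) := by
    intro j
    match j with
    | 0 =>
      show d 2 + d 0 = 3 * d 1 + 5 * u 1
      rw [hd0, hd1, hd2, hu1]; norm_num
    | Nat.succ i =>
      have a1 := hdS i
      have a2 := hdS (i + 1)
      rw [show i + 1 + 2 = i + 3 from by omega, show i + 1 + 1 = i + 2 from by omega] at a2
      have a3 := hdS (i + 2)
      rw [show i + 2 + 2 = i + 4 from by omega, show i + 2 + 1 = i + 3 from by omega] at a3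
      rw [show i + 1 + 2 = i + 3 from by omega, show i + 1 + 1 = i + 2 from by omega]
      linear_combination a1 + a3 - 3 * a2 + hurec i
  -- the key addition laws, proved jointly by strong induction on m
  have key : ∀ m n : ℕ,
      (u (n + m + m) + u n = d (n + m) * u m + d m * u (n + m)) ∧
      (d (n + m + m) + d n = d (n + m) * d m + 5 * (u (n + m) * u m)) := by
    intro m
    induction m using Nat.strong_induction_on with
    | _ m ih =>
      match m with
      | 0 =>
        intro n
        simp only [Nat.add_zero]
        constructor
        · rw [hu0, hd0]; ring
        · rw [hu0, hd0]; ring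
      | 1 =>
        intro n
        rw [show n + 1 + 1 = n + 2 from by omega]
        constructor
        · linear_combination hA1 n - d (n + 1) * hu1 - u (n + 1) * hd1
        · linear_combination hB1 n - d (n + 1) * hd1 - 5 * u (n + 1) * hu1
      | Nat.succ (Nat.succ m) =>
        intro n
        simp only [Nat.succ_eq_add_one]
        rw [show n + (m + 1 + 1) + (m + 1 + 1) = n + 2 * m + 4 from by omega,
            show n + (m + 1 + 1) = n + m + 2 from by omega,
            show m + 1 + 1 = m + 2 from by omega]
        obtain ⟨H1A, H1B⟩ := ih (m + 1) (by omega) (n + 1)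
        obtain ⟨H0A, H0B⟩ := ih m (by omega) (n + 2)
        rw [show n + 1 + (m + 1) + (m + 1) = n + 2 * m + 3 from by omega,
            show n + 1 + (m + 1) = n + m + 2 from by omega] at H1A H1B
        rw [show n + 2 + m + m = n + 2 * m + 2 from by omega,
            show n + 2 + m = n + m + 2 from by omega] at H0A H0B
        have h1 := hA1 (n + 2 * m + 2)
        have h1' := hB1 (n + 2 * m + 2)
        rw [show n + 2 * m + 2 + 2 = n + 2 * m + 4 from by omega,
            show n + 2 * m + 2 + 1 = n + 2 * m + 3 from by omega] at h1 h1'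
        have h2 := hA1 n
        have h2' := hB1 n
        have hA1m := hA1 m
        have hB1m := hB1 m
        constructor
        · linear_combination h1 + h2 + H1B + 3 * H1A - H0A -
            d (n + m + 2) * hA1m - u (n + m + 2) * hB1m
        · linear_combination h1' + h2' + 3 * H1B + 5 * H1A - H0B -
            d (n + m + 2) * hB1m - 5 * u (n + m + 2) * hA1m
  -- u m divides u (k * m) by induction on k
  have main : ∀ k m : ℕ, u m ∣ u (k * m) := by
    intro k
    induction k using Nat.strong_induction_on with
    | _ k ih =>
      match k with
      | 0 => intro m; simp [hu0]
      | 1 => intro m; simp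
      | Nat.succ (Nat.succ k) =>
        intro m
        have hk := ih k (by omega) m
        have hk1 := ih (k + 1) (by omega) m
        have hkey := (key m (k * m)).1
        simp only [Nat.succ_eq_add_one]
        rw [show (k + 1 + 1) * m = k * m + m + m from by ring]
        have e2 : k * m + m = (k + 1) * m := by ring
        rw [e2] at hkey
        have hthis : u ((k + 1) * m + m) =
            d ((k + 1) * m) * u m + d m * u ((k + 1) * m) - u (k * m) := by
          linarith
        rw [show k * m + m + m = (k + 1) * m + m from by ring, hthis]
        exact dvd_sub (dvd_add (dvd_mul_left _ _) (hk1.mul_left _)) hk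
  intro m n hmn
  obtain ⟨k, rfl⟩ := hmn
  have := main k m
  rwa [Nat.mul_comm] at this
end
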